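/- arXiv:0710.1185 — 5 statements merged into one kernel-verified Lean document; each statement's English description precedes it below -/
import Mathlib

section
/- Let Γ_1, ..., Γ_K be d×d complex Hermitian matrices satisfying Γ_j Γ_k + Γ_k Γ_j = 2δ_{jk} I for all j, k, let a_1, ..., a_K be real numbers with ℓ := ∑_j a_j² > 0 and with a_1/√ℓ ≠ -1, and set a = ∑_j a_j Γ_j, m̂ = c(a/√ℓ + Γ_1) where c = 1/√(2(1 + a_1/√ℓ)), and R = Γ_1 m̂. Then R is unitary and R a R† = √ℓ · Γ_1. -/
open Matrix

/-- The rotation `R = Γ_1 m̂`, where `m̂ = c (a/√ℓ + Γ_1)` with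
`c = 1/√(2(1 + a_1/√ℓ))`, is unitary and maps the "vector" `a = ∑_j a_j Γ_j`
to `√ℓ Γ_1`, where `ℓ = ∑_j a_j²`. -/
theorem rotation_vector_to_first_generator
    {d K : ℕ} (hK : 0 < K)
    (Γ : Fin K → Matrix (Fin d) (Fin d) ℂ)
    (hherm : ∀ j, (Γ j).IsHermitian)
    (hanti : ∀ j k, Γ j * Γ k + Γ k * Γ j =
      (if j = k then (2 : ℂ) else 0) • (1 : Matrix (Fin d) (Fin d) ℂ))
    (a : Fin K → ℝ) (ℓ : ℝ) (hℓ : ℓ = ∑ j, a j ^ 2) (hpos : 0 < ℓ)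
    (hne : a ⟨0, hK⟩ / Real.sqrt ℓ ≠ -1) :
    let A : Matrix (Fin d) (Fin d) ℂ := ∑ j, (a j : ℂ) • Γ j
    let c : ℝ := 1 / Real.sqrt (2 * (1 + a ⟨0, hK⟩ / Real.sqrt ℓ))
    let m : Matrix (Fin d) (Fin d) ℂ :=
      (c : ℂ) • (((Real.sqrt ℓ : ℝ) : ℂ)⁻¹ • A + Γ ⟨0, hK⟩)
    let R : Matrix (Fin d) (Fin d) ℂ := Γ ⟨0, hK⟩ * m
    R ∈ Matrix.unitaryGroup (Fin d) ℂ ∧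
    R * A * Rᴴ = ((Real.sqrt ℓ : ℝ) : ℂ) • Γ ⟨0, hK⟩ := by
  intro A c m R
  have hA : A = ∑ j, (a j : ℂ) • Γ j := rfl
  have hcdef : c = 1 / Real.sqrt (2 * (1 + a ⟨0, hK⟩ / Real.sqrt ℓ)) := rfl
  have hm : m = (c : ℂ) • (((Real.sqrt ℓ : ℝ) : ℂ)⁻¹ • A + Γ ⟨0, hK⟩) := rfl
  have hR : R = Γ ⟨0, hK⟩ * m := rfl
  set γ := Γ ⟨0, hK⟩ with hγdef
  set s := Real.sqrt ℓ with hsdef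
  set a0 := a ⟨0, hK⟩ with ha0def
  have hs : 0 < s := Real.sqrt_pos.2 hpos
  have hs0 : s ≠ 0 := ne_of_gt hs
  have hsq : s * s = ℓ := Real.mul_self_sqrt hpos.le
  have ha0le : a0 ^ 2 ≤ ℓ :=
    hℓ ▸ Finset.single_le_sum (fun i _ => sq_nonneg (a i)) (Finset.mem_univ _)
  have hge : -s ≤ a0 := by nlinarith [sq_nonneg (a0 + s)]
  have hα1 : 0 < 1 + a0 / s := by
    have h1 : -1 ≤ a0 / s := (le_div_iff₀ hs).2 (by linarith)
    rcases h1.lt_or_eq with h | h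
    · linarith
    · exact absurd h.symm hne
  have hc2 : c ^ 2 * (2 * (1 + a0 / s)) = 1 := by
    rw [hcdef, div_pow, one_pow, Real.sq_sqrt (by linarith : (0:ℝ) ≤ 2 * (1 + a0 / s)),
      one_div, inv_mul_cancel₀ (by linarith : (2 * (1 + a0 / s) : ℝ) ≠ 0)]
  -- Hermitian facts
  have hγH : γᴴ = γ := (hherm ⟨0, hK⟩).eq
  have hAH : Aᴴ = A := by
    rw [hA, conjTranspose_sum]
    refine Finset.sum_congr rfl fun j _ => ?_
    rw [conjTranspose_smul, (hherm j).eq, RCLike.star_def, Complex.conj_ofReal]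
  -- basic algebraic relations
  have hγ2 : γ * γ = 1 := by
    have h := hanti ⟨0, hK⟩ ⟨0, hK⟩
    rw [if_pos rfl] at h
    have h2 : (2 : ℂ) • (Γ ⟨0, hK⟩ * Γ ⟨0, hK⟩) = (2 : ℂ) • (1 : Matrix (Fin d) (Fin d) ℂ) := by
      rw [two_smul]; exact h
    exact smul_right_injective (Matrix (Fin d) (Fin d) ℂ) two_ne_zero h2
  have expand : A * A = ∑ j, ∑ k, ((a j : ℂ) * (a k : ℂ)) • (Γ j * Γ k) := by
    rw [hA, Finset.sum_mul]
    refine Finset.sum_congr rfl fun j _ => ?_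
    rw [Finset.mul_sum]
    refine Finset.sum_congr rfl fun k _ => ?_
    rw [smul_mul_assoc, mul_smul_comm, smul_smul]
  have swap : (∑ j, ∑ k, ((a j : ℂ) * (a k : ℂ)) • (Γ j * Γ k))
      = ∑ j, ∑ k, ((a j : ℂ) * (a k : ℂ)) • (Γ k * Γ j) := by
    rw [Finset.sum_comm]
    exact Finset.sum_congr rfl fun j _ => Finset.sum_congr rfl fun k _ => by
      rw [mul_comm ((a k : ℂ)) ((a j : ℂ))]
  have hA2 : A * A = ((ℓ : ℝ) : ℂ) • 1 := by
    have step1 : A * A + A * A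
        = ∑ j, ∑ k, ((a j : ℂ) * (a k : ℂ)) • (Γ j * Γ k + Γ k * Γ j) := by
      conv_lhs => rw [expand]
      nth_rewrite 2 [swap]
      rw [← Finset.sum_add_distrib]
      refine Finset.sum_congr rfl fun j _ => ?_
      rw [← Finset.sum_add_distrib]
      exact Finset.sum_congr rfl fun k _ => (smul_add _ _ _).symm
    have step2 : (∑ j, ∑ k, ((a j : ℂ) * (a k : ℂ)) • (Γ j * Γ k + Γ k * Γ j))
        = ((2 * ℓ : ℝ) : ℂ) • 1 := by
      have hptw : ∀ j k : Fin K, ((a j : ℂ) * (a k : ℂ)) • (Γ j * Γ k + Γ k * Γ j)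
          = (if j = k then ((a j : ℂ) * (a k : ℂ)) * 2 else 0) • (1 : Matrix (Fin d) (Fin d) ℂ) := by
        intro j k
        rw [hanti j k, smul_smul, mul_ite, mul_zero]
      simp only [hptw, ite_smul, zero_smul, Finset.sum_ite_eq, Finset.sum_ite_eq',
        Finset.mem_univ, if_true]
      rw [← Finset.sum_smul]
      congr 1
      rw [hℓ]
      push_cast
      rw [Finset.mul_sum]
      exact Finset.sum_congr rfl fun i _ => by ring
    have h2 : (2 : ℂ) • (A * A) = (2 : ℂ) • (((ℓ : ℝ) : ℂ) • (1 : Matrix (Fin d) (Fin d) ℂ)) := by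
      rw [two_smul, step1, step2, smul_smul]
      congr 1
      push_cast
      ring
    exact smul_right_injective (Matrix (Fin d) (Fin d) ℂ) two_ne_zero h2
  have hg : ∀ j, Γ j * γ + γ * Γ j
      = (if j = (⟨0, hK⟩ : Fin K) then (2 : ℂ) else 0) • (1 : Matrix (Fin d) (Fin d) ℂ) :=
    fun j => hanti j ⟨0, hK⟩
  have hAg : A * γ + γ * A = ((2 * a0 : ℝ) : ℂ) • 1 := by
    rw [hA, Finset.sum_mul, Finset.mul_sum, ← Finset.sum_add_distrib]
    have hptw : ∀ j : Fin K, ((a j : ℂ) • Γ j) * γ + γ * ((a j : ℂ) • Γ j)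
        = (if j = (⟨0, hK⟩ : Fin K) then (a j : ℂ) * 2 else 0) • (1 : Matrix (Fin d) (Fin d) ℂ) := by
      intro j
      rw [smul_mul_assoc, mul_smul_comm, ← smul_add, hg j, smul_smul, mul_ite, mul_zero]
    simp only [hptw, ite_smul, zero_smul, Finset.sum_ite_eq, Finset.sum_ite_eq',
      Finset.mem_univ, if_true]
    congr 1
    push_cast
    ring
  -- introduce B
  set B : Matrix (Fin d) (Fin d) ℂ := ((s : ℝ) : ℂ)⁻¹ • A with hBdef
  have hsC0 : ((s : ℝ) : ℂ) ≠ 0 := by exact_mod_cast hs0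
  have hAB : A = ((s : ℝ) : ℂ) • B := by
    rw [hBdef, smul_smul, mul_inv_cancel₀ hsC0, one_smul]
  have hℂ : ((s : ℝ) : ℂ) * ((s : ℝ) : ℂ) = ((ℓ : ℝ) : ℂ) := by
    exact_mod_cast congrArg Complex.ofReal hsq
  have hB2 : B * B = 1 := by
    rw [hBdef, smul_mul_assoc, mul_smul_comm, hA2, smul_smul, smul_smul]
    have h1 : ((s : ℝ) : ℂ)⁻¹ * ((s : ℝ) : ℂ)⁻¹ * ((ℓ : ℝ) : ℂ) = 1 := by
      rw [← hℂ]; field_simp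
    rw [h1, one_smul]
  have hBg : B * γ + γ * B = ((2 * (a0 / s) : ℝ) : ℂ) • 1 := by
    rw [hBdef, smul_mul_assoc, mul_smul_comm, ← smul_add, hAg, smul_smul]
    congr 1
    push_cast
    rw [div_eq_mul_inv]
    ring
  have hBg' : B * γ = ((2 * (a0 / s) : ℝ) : ℂ) • 1 - γ * B := eq_sub_of_add_eq hBg
  have core : (B + γ) * B * (B + γ) = ((2 : ℂ) + ((2 * (a0 / s) : ℝ) : ℂ)) • γ := by
    rw [add_mul B γ B, hB2, add_mul, one_mul, mul_add (γ * B) B γ,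
      mul_assoc γ B B, hB2, mul_one, mul_assoc γ B γ, hBg', mul_sub,
      mul_smul_comm, mul_one, ← mul_assoc γ γ B, hγ2, one_mul]
    module
  have hc2C : (c : ℂ) * (c : ℂ) * ((2 : ℂ) + ((2 * (a0 / s) : ℝ) : ℂ)) = 1 := by
    have h := congrArg Complex.ofReal hc2
    push_cast at h ⊢
    linear_combination h
  have hm2 : m * m = 1 := by
    rw [hm]
    rw [smul_mul_assoc, mul_smul_comm, smul_smul, add_mul, mul_add, mul_add,
      hB2, hγ2, hBg']
    have : (1 : Matrix (Fin d) (Fin d) ℂ) + (((2 * (a0 / s) : ℝ) : ℂ) • 1 - γ * B) + (γ * B + 1)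
        = ((2 : ℂ) + ((2 * (a0 / s) : ℝ) : ℂ)) • 1 := by module
    rw [this, smul_smul, hc2C, one_smul]
  have hBH : Bᴴ = B := by
    rw [hBdef, conjTranspose_smul, hAH]
    norm_num [Complex.conj_ofReal]
  have hmH : mᴴ = m := by
    rw [hm, conjTranspose_smul, conjTranspose_add, hBH, hγH]
    norm_num [Complex.conj_ofReal]
  have hmAm : m * A * m = ((s : ℝ) : ℂ) • γ := by
    rw [hm]
    calc ((c : ℂ) • (B + γ)) * A * ((c : ℂ) • (B + γ))
        = ((c : ℂ) * (c : ℂ)) • ((B + γ) * A * (B + γ)) := by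
          rw [smul_mul_assoc, smul_mul_assoc, mul_smul_comm, smul_smul]
      _ = ((c : ℂ) * (c : ℂ)) • (((s : ℝ) : ℂ) • ((B + γ) * B * (B + γ))) := by
          rw [hAB, mul_smul_comm, smul_mul_assoc]
      _ = ((s : ℝ) : ℂ) • γ := by
          rw [core, smul_smul, smul_smul]
          congr 1
          linear_combination ((s : ℝ) : ℂ) * hc2C
  have hRH : Rᴴ = m * γ := by
    rw [hR, conjTranspose_mul, hmH, hγH]
  have hRR : R * Rᴴ = 1 := by
    rw [hR, hRH, mul_assoc, ← mul_assoc m m γ, hm2, one_mul, hγ2]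
  have hRR' : Rᴴ * R = 1 := by
    rw [hR, hRH, mul_assoc, ← mul_assoc γ γ m, hγ2, one_mul, hm2]
  constructor
  · rw [Matrix.mem_unitaryGroup_iff]
    rw [Matrix.star_eq_conjTranspose]
    exact hRR
  · rw [hR, hRH]
    have assoc : γ * m * A * (m * γ) = γ * (m * A * m) * γ := by
      simp only [mul_assoc]
    rw [assoc, hmAm, mul_smul_comm, hγ2, smul_mul_assoc, one_mul]
end

section
/- (Meta-uncertainty relation) Let Γ_0, Γ_1, ..., Γ_{K-1} be d×d complex Hermitian matrices satisfying Γ_j Γ_k + Γ_k Γ_j = 2δ_{jk} I for all j, k, and let ρ be a density matrix (positive semidefinite with trace 1). Then ∑_{j=0}^{K-1} (Tr(ρ Γ_j))² ≤ 1, where each Tr(ρ Γ_j) is real. -/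
open Matrix ComplexOrder

lemma psd_trace_nonneg' {n : ℕ} {P : Matrix (Fin n) (Fin n) ℂ} (hP : P.PosSemidef) :
    0 ≤ P.trace := by
  have h : ∀ i, 0 ≤ P i i := fun i => hP.diag_nonneg
  exact Finset.sum_nonneg fun i _ => h i

open scoped MatrixOrder in
lemma trace_mul_psd_nonneg' {n : ℕ} {ρ N : Matrix (Fin n) (Fin n) ℂ}
    (hρ : ρ.PosSemidef) (hN : N.PosSemidef) : 0 ≤ (ρ * N).trace := by
  have h1 : ρ * N = CFC.sqrt ρ * (CFC.sqrt ρ * N) := by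
    rw [← mul_assoc, CFC.sqrt_mul_sqrt_self ρ hρ.nonneg]
  rw [h1, trace_mul_comm]
  have h2 : (CFC.sqrt ρ * N * CFC.sqrt ρ).PosSemidef := by
    have := hN.conjTranspose_mul_mul_same (CFC.sqrt ρ)
    rwa [(CFC.sqrt_nonneg ρ).posSemidef.1] at this
  rw [← mul_assoc] at *
  exact psd_trace_nonneg' h2

/-- Meta-uncertainty relation: for a family of anticommuting Hermitian
involutions `Γ_j` and any density matrix `ρ`, the squared expectations satisfy
`∑_j (Tr(ρ Γ_j))² ≤ 1`. -/
theorem meta_uncertainty_relation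
    {d K : ℕ}
    (Γ : Fin K → Matrix (Fin d) (Fin d) ℂ)
    (hherm : ∀ j, (Γ j).IsHermitian)
    (hanti : ∀ j k, Γ j * Γ k + Γ k * Γ j =
      (if j = k then (2 : ℂ) else 0) • (1 : Matrix (Fin d) (Fin d) ℂ))
    (ρ : Matrix (Fin d) (Fin d) ℂ) (hρ : ρ.PosSemidef) (hρtr : ρ.trace = 1) :
    ∑ j, ((ρ * Γ j).trace.re) ^ 2 ≤ 1 := by
  set c : Fin K → ℝ := fun j => ((ρ * Γ j).trace).re with hc
  set S : ℝ := ∑ j, (c j) ^ 2 with hS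
  have hSnn : 0 ≤ S := Finset.sum_nonneg fun j _ => sq_nonneg _
  show S ≤ 1
  rcases eq_or_lt_of_le hSnn with h0 | hSpos
  · linarith
  set A : Matrix (Fin d) (Fin d) ℂ := ∑ j, (c j : ℂ) • Γ j with hA
  -- A * A = S • 1
  have hAA : A * A = ((S : ℝ) : ℂ) • 1 := by
    have expand : A * A = ∑ j, ∑ k, ((c j : ℂ) * (c k : ℂ)) • (Γ j * Γ k) := by
      rw [hA, Finset.sum_mul]
      refine Finset.sum_congr rfl fun j _ => ?_
      rw [Finset.mul_sum]
      refine Finset.sum_congr rfl fun k _ => ?_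
      rw [smul_mul_assoc, mul_smul_comm, smul_smul]
    have expand' : A * A = ∑ j, ∑ k, ((c j : ℂ) * (c k : ℂ)) • (Γ k * Γ j) := by
      rw [expand, Finset.sum_comm]
      refine Finset.sum_congr rfl fun j _ => Finset.sum_congr rfl fun k _ => ?_
      rw [mul_comm ((c k : ℂ))]
    have h2 : (2 : ℂ) • (A * A) = ((2 * S : ℝ) : ℂ) • (1 : Matrix (Fin d) (Fin d) ℂ) := by
      rw [two_smul]
      nth_rewrite 1 [expand]
      nth_rewrite 1 [expand']
      rw [← Finset.sum_add_distrib]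
      have hrow : ∀ j ∈ Finset.univ, (∑ k, ((c j : ℂ) * (c k : ℂ)) • (Γ j * Γ k))
          + (∑ k, ((c j : ℂ) * (c k : ℂ)) • (Γ k * Γ j))
          = ((2 * (c j : ℂ) ^ 2)) • (1 : Matrix (Fin d) (Fin d) ℂ) := by
        intro j _
        rw [← Finset.sum_add_distrib]
        have hterm : ∀ k ∈ Finset.univ, ((c j : ℂ) * (c k : ℂ)) • (Γ j * Γ k)
            + ((c j : ℂ) * (c k : ℂ)) • (Γ k * Γ j)
            = if j = k then ((2 * (c j : ℂ) * (c k : ℂ))) • (1 : Matrix (Fin d) (Fin d) ℂ) else 0 := by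
          intro k _
          rw [← smul_add, hanti j k]
          split
          · rw [smul_smul]; ring_nf
          · simp
        rw [Finset.sum_congr rfl hterm, Finset.sum_ite_eq Finset.univ j
          (fun k => ((2 * (c j : ℂ) * (c k : ℂ))) • (1 : Matrix (Fin d) (Fin d) ℂ))]
        simp [pow_two, mul_assoc]
      rw [Finset.sum_congr rfl hrow, ← Finset.sum_smul]
      congr 1
      rw [hS]
      push_cast
      rw [Finset.mul_sum]
    have h3 : (2 : ℂ) • (A * A) = (2 : ℂ) • (((S : ℝ) : ℂ) • (1 : Matrix (Fin d) (Fin d) ℂ)) := by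
      rw [h2, ← mul_smul]; push_cast; ring_nf
    exact smul_right_injective _ two_ne_zero h3
  have hAherm : A.IsHermitian := by
    show Aᴴ = A
    rw [hA, conjTranspose_sum]
    refine Finset.sum_congr rfl fun j _ => ?_
    rw [conjTranspose_smul, (hherm j).eq]
    simp [Complex.conj_ofReal]
  set s : ℝ := Real.sqrt S with hs
  have hs2 : s ^ 2 = S := Real.sq_sqrt hSnn
  have hspos : 0 < s := Real.sqrt_pos.mpr hSpos
  set M : Matrix (Fin d) (Fin d) ℂ := ((s : ℂ)) • 1 - A with hM
  have hMh : M.IsHermitian := by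
    show Mᴴ = M
    rw [hM, conjTranspose_sub, conjTranspose_smul, conjTranspose_one, hAherm.eq]
    simp [Complex.conj_ofReal]
  have hs2c : ((s : ℂ)) * ((s : ℂ)) = ((S : ℝ) : ℂ) := by
    rw [← Complex.ofReal_mul]
    norm_cast
    nlinarith
  have hMM : M * M = (((2 * s : ℝ)) : ℂ) • M := by
    rw [hM]
    simp only [sub_mul, mul_sub, smul_mul_assoc, Matrix.mul_smul, mul_one, one_mul,
      hAA, smul_smul, hs2c, smul_sub]
    push_cast
    match_scalars
    · linear_combination (-2 : ℂ) * hs2c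
    · linear_combination (0 : ℂ) * hs2c
  -- trace computations
  have hTA : ((ρ * A).trace).re = S := by
    rw [hA, Finset.mul_sum]
    simp only [mul_smul_comm, trace_sum, trace_smul]
    rw [Complex.re_sum]
    refine Finset.sum_congr rfl fun j _ => ?_
    simp [smul_eq_mul, Complex.re_ofReal_mul, pow_two]
    exact Or.inl rfl
  have hTM : ((ρ * M).trace).re = s - S := by
    rw [hM, mul_sub, mul_smul_comm, mul_one, trace_sub, trace_smul, hρtr]
    simp [Complex.sub_re, hTA]
  have hMMpsd : (M * M).PosSemidef := by
    have := posSemidef_conjTranspose_mul_self M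
    rwa [hMh.eq] at this
  have hkey : 0 ≤ ((ρ * (M * M)).trace).re :=
    (Complex.le_def.mp (trace_mul_psd_nonneg' hρ hMMpsd)).1
  have htr2 : ((ρ * (M * M)).trace).re = 2 * s * (s - S) := by
    rw [hMM, mul_smul_comm, trace_smul]
    simp [smul_eq_mul, Complex.re_ofReal_mul, hTM]
  rw [htr2] at hkey
  nlinarith
end

section
/- (Theorem 1, collision-entropy uncertainty relation, lower bound) Let Γ_0, ..., Γ_{K-1} (K ≥ 1) be d×d complex Hermitian matrices satisfying Γ_j Γ_k + Γ_k Γ_j = 2δ_{jk} I, with spectral projectors Γ_j^b = (I + (-1)^b Γ_j)/2 for b ∈ {0,1}. For a density matrix ρ define the collision entropy of measuring Γ_j on ρ as H₂(Γ_j|ρ) = -log₂( (Tr(Γ_j^0 ρ))² + (Tr(Γ_j^1 ρ))² ). Then for every density matrix ρ, (1/K) ∑_{j=0}^{K-1} H₂(Γ_j|ρ) ≥ 1 - log₂(1 + 1/K). -/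
open Matrix ComplexOrder

lemma psd_eq_ct_mul_self_aux {n : ℕ} {A : Matrix (Fin n) (Fin n) ℂ} (hA : A.PosSemidef) :
    ∃ B : Matrix (Fin n) (Fin n) ℂ, A = Bᴴ * B := by
  open scoped MatrixOrder Matrix.Norms.L2Operator in
  obtain ⟨B, hB⟩ := CStarAlgebra.nonneg_iff_eq_star_mul_self.mp hA.nonneg
  exact ⟨B, hB⟩

/-- Trace of a product of two PSD complex matrices is nonnegative. -/
lemma trace_mul_psd_nonneg {n : ℕ} {A B : Matrix (Fin n) (Fin n) ℂ}
    (hA : A.PosSemidef) (hB : B.PosSemidef) : 0 ≤ (A * B).trace := by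
  obtain ⟨C, rfl⟩ := psd_eq_ct_mul_self_aux hA
  obtain ⟨D, rfl⟩ := psd_eq_ct_mul_self_aux hB
  have h : (Cᴴ * C * (Dᴴ * D)).trace = ((C * Dᴴ)ᴴ * (C * Dᴴ)).trace := by
    rw [Matrix.conjTranspose_mul, Matrix.conjTranspose_conjTranspose]
    rw [show Cᴴ * C * (Dᴴ * D) = (Cᴴ * C * Dᴴ) * D by noncomm_ring,
      Matrix.trace_mul_comm]
    noncomm_ring
  rw [h]
  rw [Matrix.trace]
  apply Finset.sum_nonneg
  intro i _
  rw [Matrix.diag_apply, Matrix.mul_apply]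
  apply Finset.sum_nonneg
  intro k _
  simpa [Matrix.conjTranspose_apply] using star_mul_self_nonneg ((C * Dᴴ) k i)

lemma sum_sq_trace_le_one {d K : ℕ}
    (Γ : Fin K → Matrix (Fin d) (Fin d) ℂ)
    (hherm : ∀ j, (Γ j).IsHermitian)
    (hanti : ∀ j k, Γ j * Γ k + Γ k * Γ j =
      (if j = k then (2 : ℂ) else 0) • (1 : Matrix (Fin d) (Fin d) ℂ))
    (ρ : Matrix (Fin d) (Fin d) ℂ) (hρ : ρ.PosSemidef) (hρtr : ρ.trace = 1) :
    ∑ j, ((Γ j * ρ).trace.re) ^ 2 ≤ 1 := by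
  set t : Fin K → ℝ := fun j => ((Γ j * ρ).trace.re) with ht
  set s : ℝ := ∑ j, (t j) ^ 2 with hs
  have hs0 : 0 ≤ s := Finset.sum_nonneg fun j _ => sq_nonneg _
  rcases eq_or_lt_of_le hs0 with h0 | hspos
  · rw [← h0]; norm_num
  set c : ℝ := Real.sqrt s with hc
  have hcpos : 0 < c := Real.sqrt_pos.mpr hspos
  have hc2 : c * c = s := Real.mul_self_sqrt hs0
  set M : Matrix (Fin d) (Fin d) ℂ := ∑ j, ((t j : ℂ)) • Γ j with hM
  -- M * M = s • 1
  have expand : M * M = ∑ j, ∑ k, (((t j : ℂ)) * (t k)) • (Γ j * Γ k) := by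
    rw [hM, Finset.sum_mul]
    refine Finset.sum_congr rfl fun j _ => ?_
    rw [Finset.mul_sum]
    refine Finset.sum_congr rfl fun k _ => ?_
    rw [Matrix.smul_mul, Matrix.mul_smul, smul_smul]
  have expand' : M * M = ∑ j, ∑ k, (((t j : ℂ)) * (t k)) • (Γ k * Γ j) := by
    rw [expand, Finset.sum_comm]
    exact Finset.sum_congr rfl fun j _ => Finset.sum_congr rfl fun k _ => by
      rw [mul_comm ((t k : ℂ)) ((t j : ℂ))]
  have hMM : M * M = ((s : ℂ)) • 1 := by
    have h2 : M * M + M * M = ((2 * s : ℝ) : ℂ) • (1 : Matrix (Fin d) (Fin d) ℂ) := by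
      nth_rewrite 1 [expand]
      nth_rewrite 1 [expand']
      rw [← Finset.sum_add_distrib]
      have : ∀ j : Fin K, (∑ k, (((t j : ℂ)) * (t k)) • (Γ j * Γ k)) +
          (∑ k, (((t j : ℂ)) * (t k)) • (Γ k * Γ j)) =
          (((t j : ℂ)) * (t j) * 2) • (1 : Matrix (Fin d) (Fin d) ℂ) := by
        intro j
        rw [← Finset.sum_add_distrib]
        have : ∀ k : Fin K, (((t j : ℂ)) * (t k)) • (Γ j * Γ k) +
            (((t j : ℂ)) * (t k)) • (Γ k * Γ j) =
            (((t j : ℂ)) * (t k)) • ((if j = k then (2:ℂ) else 0) •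
              (1 : Matrix (Fin d) (Fin d) ℂ)) := by
          intro k
          rw [← smul_add, hanti j k]
        rw [Finset.sum_congr rfl fun k _ => this k]
        simp [smul_smul, Finset.sum_ite_eq, mul_comm]
      rw [Finset.sum_congr rfl fun j _ => this j, ← Finset.sum_smul]
      congr 1
      rw [hs]
      push_cast
      rw [Finset.mul_sum]
      exact Finset.sum_congr rfl fun j _ => by ring
    have h3 : (2 : ℂ) • (M * M) = (2 : ℂ) • (((s : ℂ)) • (1 : Matrix (Fin d) (Fin d) ℂ)) := by
      rw [two_smul, h2, smul_smul]
      congr 1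
      push_cast
      ring
    exact smul_right_injective _ (two_ne_zero) h3
  have hMherm : Mᴴ = M := by
    rw [hM, Matrix.conjTranspose_sum]
    exact Finset.sum_congr rfl fun j _ => by
      rw [Matrix.conjTranspose_smul, (hherm j).eq, Complex.star_def, Complex.conj_ofReal]
  set A : Matrix (Fin d) (Fin d) ℂ := (c : ℂ) • 1 - M with hA
  have hAherm : A.IsHermitian := by
    rw [Matrix.IsHermitian, hA, Matrix.conjTranspose_sub, Matrix.conjTranspose_smul, hMherm,
      Matrix.conjTranspose_one, Complex.star_def, Complex.conj_ofReal]
  have hA2 : A * A = ((2 * c : ℝ) : ℂ) • A := by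
    have hsc : ((s : ℝ) : ℂ) = (c : ℂ) * c := by rw [← hc2]; push_cast; ring
    rw [hA]
    simp only [sub_mul, mul_sub, smul_mul_assoc, mul_smul_comm, Matrix.one_mul,
      Matrix.mul_one, hMM]
    rw [hsc]
    push_cast
    module
  have hApsd : A.PosSemidef := by
    refine Matrix.PosSemidef.of_dotProduct_mulVec_nonneg hAherm fun x => ?_
    have key : ((2 * c : ℝ) : ℂ) * (dotProduct (star x) (A.mulVec x)) =
        dotProduct (star (A.mulVec x)) (A.mulVec x) := by
      rw [← smul_eq_mul, ← dotProduct_smul, ← Matrix.smul_mulVec, ← hA2,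
        ← Matrix.mulVec_mulVec, dotProduct_mulVec, Matrix.star_mulVec, hAherm.eq]
    have hnn := dotProduct_star_self_nonneg (A.mulVec x)
    rw [← key] at hnn
    rw [Complex.le_def] at hnn ⊢
    obtain ⟨h1, h2⟩ := hnn
    simp only [Complex.zero_re, Complex.zero_im, Complex.mul_re, Complex.mul_im,
      Complex.ofReal_re, Complex.ofReal_im] at h1 h2 ⊢
    constructor <;> nlinarith
  have htr := trace_mul_psd_nonneg hApsd hρ
  have htrAρ : (A * ρ).trace = (c : ℂ) - (M * ρ).trace := by
    rw [hA, Matrix.sub_mul, Matrix.trace_sub, Matrix.smul_mul, Matrix.one_mul,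
      Matrix.trace_smul, hρtr, smul_eq_mul, mul_one]
  have htrMρ : ((M * ρ).trace).re = s := by
    rw [hM, Finset.sum_mul, Matrix.trace_sum]
    rw [Complex.re_sum]
    rw [hs]
    refine Finset.sum_congr rfl fun j _ => ?_
    rw [Matrix.smul_mul, Matrix.trace_smul, smul_eq_mul, Complex.mul_re]
    simp only [Complex.ofReal_re, Complex.ofReal_im, zero_mul, sub_zero]
    rw [pow_two]
  have : 0 ≤ c - s := by
    have := (Complex.le_def.mp htr).1
    rw [htrAρ] at this
    simpa [htrMρ] using this
  nlinarith [Real.sq_sqrt hs0, Real.sqrt_nonneg s]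

/-- Theorem 1 (collision-entropy uncertainty relation, lower bound): for `K`
anticommuting Hermitian involutions `Γ_j` with spectral projectors
`Γ_j^b = (𝟙 + (-1)^b Γ_j)/2` and any density matrix `ρ`,
`(1/K) ∑_j H₂(Γ_j|ρ) ≥ 1 - log₂(1 + 1/K)`, where
`H₂(Γ_j|ρ) = -log₂((Tr(Γ_j^0 ρ))² + (Tr(Γ_j^1 ρ))²)`. -/
theorem collision_entropy_uncertainty_relation
    {d K : ℕ} (hK : 1 ≤ K)
    (Γ : Fin K → Matrix (Fin d) (Fin d) ℂ)
    (hherm : ∀ j, (Γ j).IsHermitian)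
    (hanti : ∀ j k, Γ j * Γ k + Γ k * Γ j =
      (if j = k then (2 : ℂ) else 0) • (1 : Matrix (Fin d) (Fin d) ℂ))
    (ρ : Matrix (Fin d) (Fin d) ℂ) (hρ : ρ.PosSemidef) (hρtr : ρ.trace = 1) :
    1 - Real.logb 2 (1 + 1 / K) ≤
      (K : ℝ)⁻¹ * ∑ j, -Real.logb 2
        (((((2 : ℂ)⁻¹ • (1 + Γ j)) * ρ).trace.re) ^ 2 +
          ((((2 : ℂ)⁻¹ • (1 - Γ j)) * ρ).trace.re) ^ 2) := by
  have hsum := sum_sq_trace_le_one Γ hherm hanti ρ hρ hρtr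

  have hKpos : (0:ℝ) < K := by exact_mod_cast hK
  set t : Fin K → ℝ := fun j => ((Γ j * ρ).trace.re) with ht
  -- rewrite each summand
  have hp : ∀ j, (((((2 : ℂ)⁻¹ • (1 + Γ j)) * ρ).trace.re) ^ 2 +
      ((((2 : ℂ)⁻¹ • (1 - Γ j)) * ρ).trace.re) ^ 2) = (1 + (t j)^2) / 2 := by
    intro j
    have h0 : (((2 : ℂ)⁻¹ • (1 + Γ j)) * ρ).trace = 2⁻¹ * (1 + (Γ j * ρ).trace) := by
      rw [Matrix.smul_mul, Matrix.trace_smul, Matrix.add_mul, Matrix.trace_add,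
        Matrix.one_mul, hρtr, smul_eq_mul]
    have h1 : (((2 : ℂ)⁻¹ • (1 - Γ j)) * ρ).trace = 2⁻¹ * (1 - (Γ j * ρ).trace) := by
      rw [Matrix.smul_mul, Matrix.trace_smul, Matrix.sub_mul, Matrix.trace_sub,
        Matrix.one_mul, hρtr, smul_eq_mul]
    rw [h0, h1]
    have h2 : ((2:ℂ)⁻¹) = ((2⁻¹ : ℝ) : ℂ) := by push_cast; ring
    rw [h2]
    simp only [Complex.mul_re, Complex.ofReal_re, Complex.ofReal_im, Complex.add_re,
      Complex.sub_re, Complex.one_re, Complex.add_im, Complex.sub_im, Complex.one_im,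
      zero_mul, sub_zero, ht]
    ring
  have hlog : ∀ j, -Real.logb 2 ((1 + (t j)^2)/2) = 1 - Real.logb 2 (1 + (t j)^2) := by
    intro j
    have hpos : (0:ℝ) < 1 + (t j)^2 := by positivity
    rw [Real.logb_div (ne_of_gt hpos) (by norm_num), Real.logb_self_eq_one (by norm_num)]
    ring
  simp only [hp, hlog]
  rw [Finset.sum_sub_distrib, Finset.sum_const, Finset.card_univ, Fintype.card_fin,
    nsmul_eq_mul, mul_one, mul_sub, inv_mul_cancel₀ (ne_of_gt hKpos)]
  have key : (K : ℝ)⁻¹ * ∑ j, Real.logb 2 (1 + (t j)^2) ≤ Real.logb 2 (1 + 1 / K) := by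
    have jensen := (strictConcaveOn_log_Ioi.concaveOn).le_map_sum
      (t := Finset.univ) (w := fun _ : Fin K => (K:ℝ)⁻¹) (p := fun j => 1 + (t j)^2)
      (fun i _ => by positivity)
      (by simp [mul_inv_cancel₀ (ne_of_gt hKpos)])
      (fun i _ => by simp only [Set.mem_Ioi]; positivity)
    have hsum' : ∑ j, (K:ℝ)⁻¹ • (1 + (t j)^2) = 1 + (K:ℝ)⁻¹ * ∑ j, (t j)^2 := by
      simp only [smul_eq_mul, mul_add, Finset.sum_add_distrib, Finset.mul_sum]
      rw [Finset.sum_const, Finset.card_univ, Fintype.card_fin, nsmul_eq_mul, mul_one,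
        mul_inv_cancel₀ (ne_of_gt hKpos)]
    rw [hsum'] at jensen
    have hmono : Real.log (1 + (K:ℝ)⁻¹ * ∑ j, (t j)^2) ≤ Real.log (1 + 1/K) := by
      apply Real.log_le_log (by positivity)
      have : (K:ℝ)⁻¹ * ∑ j, (t j)^2 ≤ (K:ℝ)⁻¹ * 1 :=
        mul_le_mul_of_nonneg_left hsum (by positivity)
      rw [one_div]; linarith
    have h2 : ∑ j, (K:ℝ)⁻¹ • Real.log (1 + (t j)^2) ≤ Real.log (1 + 1/K) :=
      le_trans jensen hmono
    have h2' : ∑ j, (K:ℝ)⁻¹ * Real.log (1 + (t j)^2) ≤ Real.log (1 + 1/(K:ℝ)) := by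
      simpa using h2
    calc (K:ℝ)⁻¹ * ∑ j, Real.logb 2 (1 + (t j)^2)
        = (∑ j, (K:ℝ)⁻¹ * Real.log (1 + (t j)^2)) / Real.log 2 := by
          simp only [Real.logb, Finset.mul_sum]
          rw [Finset.sum_div]
          exact Finset.sum_congr rfl fun i _ => by ring
      _ ≤ Real.log (1 + 1/(K:ℝ)) / Real.log 2 :=
          (div_le_div_iff_of_pos_right (Real.log_pos one_lt_two)).mpr h2'
      _ = Real.logb 2 (1 + 1/(K:ℝ)) := rfl
  linarith
end

section
/- (Min-entropy uncertainty relation) Let Γ_0, ..., Γ_{K-1} (K ≥ 1) be d×d complex Hermitian matrices satisfying Γ_j Γ_k + Γ_k Γ_j = 2δ_{jk} I, with spectral projectors Γ_j^b = (I + (-1)^b Γ_j)/2 for b ∈ {0,1}. For a density matrix ρ define the min-entropy H_∞(Γ_j|ρ) = -log₂ max(Tr(Γ_j^0 ρ), Tr(Γ_j^1 ρ)). Then for every density matrix ρ, (1/K) ∑_{j=0}^{K-1} H_∞(Γ_j|ρ) ≥ 1 - log₂(1 + 1/√K). -/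
open Matrix ComplexOrder

lemma psd_trace_re_nonneg {n : Type*} [Fintype n] [DecidableEq n] {M : Matrix n n ℂ}
    (h : M.PosSemidef) : 0 ≤ M.trace.re := by
  have hdiag : ∀ i, 0 ≤ M i i := by
    intro i
    have := h.dotProduct_mulVec_nonneg (Pi.single i 1)
    rw [mulVec_single, dotProduct, Finset.sum_eq_single i
      (fun b _ hb => by simp [Pi.single_eq_of_ne hb]) (by simp)] at this
    simpa using this
  have : 0 ≤ M.trace := Finset.sum_nonneg fun i _ => hdiag i
  exact (Complex.nonneg_iff.mp this).1

lemma psd_smul_real {n : Type*} [Fintype n] {M : Matrix n n ℂ} (h : M.PosSemidef)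
    {r : ℝ} (hr : 0 ≤ r) : ((r : ℂ) • M).PosSemidef := by
  refine posSemidef_iff_dotProduct_mulVec.mpr ⟨?_, ?_⟩
  · unfold Matrix.IsHermitian
    rw [conjTranspose_smul, h.1.eq]
    congr 1
    simp [Complex.star_def, Complex.conj_ofReal]
  · intro x
    rw [smul_mulVec, dotProduct_smul]
    exact smul_nonneg (by positivity) (h.dotProduct_mulVec_nonneg x)

open scoped MatrixOrder in
lemma psd_sqrt_exists {n : Type*} [Fintype n] [DecidableEq n] {A : Matrix n n ℂ}
    (h : A.PosSemidef) : ∃ Q : Matrix n n ℂ, Qᴴ = Q ∧ Q * Q = A :=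
  ⟨CFC.sqrt A, (CFC.sqrt_nonneg A).posSemidef.1, CFC.sqrt_mul_sqrt_self A h.nonneg⟩

/-- Min-entropy uncertainty relation: for `K` anticommuting Hermitian
involutions with spectral projectors `Γ_j^b = (𝟙 + (-1)^b Γ_j)/2` and any
density matrix `ρ`, `(1/K) ∑_j H_∞(Γ_j|ρ) ≥ 1 - log₂(1 + 1/√K)`, where
`H_∞(Γ_j|ρ) = -log₂ max(Tr(Γ_j^0 ρ), Tr(Γ_j^1 ρ))`. -/
theorem min_entropy_uncertainty_relation
    {d K : ℕ} (hK : 1 ≤ K)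
    (Γ : Fin K → Matrix (Fin d) (Fin d) ℂ)
    (hherm : ∀ j, (Γ j).IsHermitian)
    (hanti : ∀ j k, Γ j * Γ k + Γ k * Γ j =
      (if j = k then (2 : ℂ) else 0) • (1 : Matrix (Fin d) (Fin d) ℂ))
    (ρ : Matrix (Fin d) (Fin d) ℂ) (hρ : ρ.PosSemidef) (hρtr : ρ.trace = 1) :
    1 - Real.logb 2 (1 + 1 / Real.sqrt K) ≤
      (K : ℝ)⁻¹ * ∑ j, -Real.logb 2
        (max ((((2 : ℂ)⁻¹ • (1 + Γ j)) * ρ).trace.re)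
             ((((2 : ℂ)⁻¹ • (1 - Γ j)) * ρ).trace.re)) := by
  have hKpos : (0 : ℝ) < K := by exact_mod_cast hK
  set t : Fin K → ℝ := fun j => ((Γ j * ρ).trace.re) with ht
  have htr : ∀ j, (Γ j * ρ).trace = ((t j : ℝ) : ℂ) := by
    intro j
    have hst : (starRingEnd ℂ) ((Γ j * ρ).trace) = (Γ j * ρ).trace := by
      have := trace_conjTranspose (Γ j * ρ)
      rw [conjTranspose_mul, (hherm j).eq, hρ.1.eq, trace_mul_comm] at this
      exact this.symm
    exact (Complex.conj_eq_iff_re.mp hst).symm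
  set c : ℝ := ∑ j, t j ^ 2 with hc
  have hc0 : 0 ≤ c := Finset.sum_nonneg fun j _ => sq_nonneg _
  -- Step A : c ≤ 1
  have hc1 : c ≤ 1 := by
    set S : Matrix (Fin d) (Fin d) ℂ := ∑ j, ((t j : ℝ) : ℂ) • Γ j with hS
    have hSherm : Sᴴ = S := by
      rw [hS, conjTranspose_sum]
      refine Finset.sum_congr rfl fun j _ => ?_
      rw [conjTranspose_smul, (hherm j).eq]
      congr 1
      simp [Complex.star_def, Complex.conj_ofReal]
    have hexp : S * S = ∑ j, ∑ k, (((t j : ℝ) : ℂ) * ((t k : ℝ) : ℂ)) • (Γ j * Γ k) := by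
      rw [hS, Finset.sum_mul_sum]
      exact Finset.sum_congr rfl fun j _ => Finset.sum_congr rfl fun k _ =>
        (smul_mul_smul_comm _ _ _ _)
    have hSS : S * S = ((c : ℝ) : ℂ) • 1 := by
      have hswap : (∑ j, ∑ k, (((t j:ℝ):ℂ) * ((t k:ℝ):ℂ)) • (Γ j * Γ k))
          = ∑ j, ∑ k, (((t j:ℝ):ℂ) * ((t k:ℝ):ℂ)) • (Γ k * Γ j) := by
        rw [Finset.sum_comm]
        exact Finset.sum_congr rfl fun j _ => Finset.sum_congr rfl fun k _ => by rw [mul_comm]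
      have key : S * S + S * S = (((2 * c : ℝ)) : ℂ) • 1 := by
        calc S * S + S * S
            = (∑ j, ∑ k, (((t j:ℝ):ℂ)*((t k:ℝ):ℂ)) • (Γ j * Γ k))
              + ∑ j, ∑ k, (((t j:ℝ):ℂ)*((t k:ℝ):ℂ)) • (Γ k * Γ j) := by
              rw [hexp]
              nth_rewrite 2 [hswap]
              rfl
          _ = ∑ j, ∑ k, (((t j:ℝ):ℂ)*((t k:ℝ):ℂ)) • (Γ j * Γ k + Γ k * Γ j) := by
              rw [← Finset.sum_add_distrib]
              exact Finset.sum_congr rfl fun j _ => by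
                rw [← Finset.sum_add_distrib]
                exact Finset.sum_congr rfl fun k _ => (smul_add _ _ _).symm
          _ = ∑ j, ((2:ℂ) * ((t j:ℝ):ℂ)^2) • (1 : Matrix (Fin d) (Fin d) ℂ) := by
              refine Finset.sum_congr rfl fun j _ => ?_
              rw [Finset.sum_congr rfl (fun k _ => by rw [hanti j k, smul_smul])]
              rw [← Finset.sum_smul]
              congr 1
              rw [Finset.sum_eq_single j (fun k _ hk => by simp [(Ne.symm hk : ¬ j = k)]) (by simp)]
              simp; ring
          _ = (((2 * c : ℝ)) : ℂ) • 1 := by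
              rw [← Finset.sum_smul]
              congr 1
              rw [hc]
              push_cast
              rw [Finset.mul_sum]
      have h2 : (2 : ℂ) • (S * S) = (2 : ℂ) • (((c : ℝ) : ℂ) • 1) := by
        rw [two_smul, key, smul_smul]
        push_cast
        ring_nf
      exact smul_right_injective _ (two_ne_zero) h2
    have hStr : (S * ρ).trace = ((c : ℝ) : ℂ) := by
      rw [hS, Finset.sum_mul, trace_sum]
      rw [Finset.sum_congr rfl (fun j _ => by rw [smul_mul_assoc, trace_smul, htr j])]
      push_cast
      rw [hc]
      push_cast
      refine Finset.sum_congr rfl fun j _ => ?_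
      simp [smul_eq_mul]
      ring
    rcases eq_or_lt_of_le hc0 with h0 | hcpos
    · linarith
    set r : ℝ := Real.sqrt c with hr
    have hrpos : 0 < r := Real.sqrt_pos.mpr hcpos
    have hr2 : r * r = c := Real.mul_self_sqrt hc0
    set M : Matrix (Fin d) (Fin d) ℂ := ((r : ℝ) : ℂ) • 1 - S with hM
    have hMH : Mᴴ = M := by
      rw [hM, conjTranspose_sub, conjTranspose_smul, conjTranspose_one, hSherm]
      congr 2
      simp [Complex.star_def, Complex.conj_ofReal]
    have hc' : ((c : ℝ) : ℂ) = ((r:ℝ):ℂ) * ((r:ℝ):ℂ) := by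
      rw [← hr2]; push_cast; ring
    have hMM : M * M = (((2 * r : ℝ)) : ℂ) • M := by
      rw [hM]
      simp only [sub_mul, mul_sub, smul_mul_assoc, mul_smul_comm, one_mul, mul_one, smul_smul]
      rw [hSS, hc']
      push_cast
      module
    have hMpsd : M.PosSemidef := by
      have h1 : M = (((2*r)⁻¹ : ℝ) : ℂ) • (Mᴴ * M) := by
        rw [hMH, hMM, smul_smul]
        rw [show ((((2*r)⁻¹ : ℝ)) : ℂ) * (((2 * r : ℝ)) : ℂ) = 1 by
          push_cast; field_simp]
        rw [one_smul]
      rw [h1]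
      exact psd_smul_real (posSemidef_conjTranspose_mul_self M) (by positivity)
    have htrM : 0 ≤ ((M * ρ).trace).re := by
      obtain ⟨Q, hQH, hQQ⟩ := psd_sqrt_exists hρ
      have : (M * ρ).trace = (Qᴴ * M * Q).trace := by
        rw [hQH, ← hQQ, ← mul_assoc, trace_mul_comm, ← mul_assoc]
      rw [this]
      exact psd_trace_re_nonneg (hMpsd.conjTranspose_mul_mul_same Q)
    have htrM' : (M * ρ).trace = ((r - c : ℝ) : ℂ) := by
      rw [hM, sub_mul, trace_sub, smul_mul_assoc, one_mul, trace_smul, hρtr, hStr]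
      push_cast
      simp [smul_eq_mul]
    rw [htrM'] at htrM
    simp only [Complex.ofReal_re] at htrM
    nlinarith [htrM, hr2, hrpos]
  -- Step B : entropy bound
  have hterm : ∀ j, -Real.logb 2
      (max ((((2 : ℂ)⁻¹ • (1 + Γ j)) * ρ).trace.re)
           ((((2 : ℂ)⁻¹ • (1 - Γ j)) * ρ).trace.re))
      = 1 - Real.logb 2 (1 + |t j|) := by
    intro j
    have hp0 : (((2 : ℂ)⁻¹ • (1 + Γ j)) * ρ).trace.re = (1 + t j)/2 := by
      rw [smul_mul_assoc, trace_smul, add_mul, one_mul, trace_add, hρtr, htr j]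
      rw [show ((2:ℂ)⁻¹ • ((1 : ℂ) + ((t j : ℝ):ℂ))) = (((1 + t j)/2 : ℝ) : ℂ) by
        rw [smul_eq_mul]; push_cast; ring]
      rw [Complex.ofReal_re]
    have hp1 : (((2 : ℂ)⁻¹ • (1 - Γ j)) * ρ).trace.re = (1 - t j)/2 := by
      rw [smul_mul_assoc, trace_smul, sub_mul, one_mul, trace_sub, hρtr, htr j]
      rw [show ((2:ℂ)⁻¹ • ((1 : ℂ) - ((t j : ℝ):ℂ))) = (((1 - t j)/2 : ℝ) : ℂ) by
        rw [smul_eq_mul]; push_cast; ring]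
      rw [Complex.ofReal_re]
    rw [hp0, hp1]
    have hmax : max ((1 + t j)/2) ((1 - t j)/2) = (1 + |t j|)/2 := by
      rcases abs_cases (t j) with ⟨h1, h2⟩ | ⟨h1, h2⟩
      · rw [h1, max_eq_left (by linarith)]
      · rw [h1, max_eq_right (by linarith)]; ring
    rw [hmax]
    have habs : (0:ℝ) < 1 + |t j| := by positivity
    rw [Real.logb_div (by linarith) (by norm_num),
      Real.logb_self_eq_one (by norm_num : (1:ℝ) < 2)]
    ring
  rw [Finset.sum_congr rfl (fun j _ => hterm j)]
  rw [Finset.sum_sub_distrib, Finset.sum_const, Finset.card_univ, Fintype.card_fin,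
    nsmul_eq_mul, mul_one]
  -- remains: 1 - logb 2 (1 + 1/√K) ≤ K⁻¹ * (K - ∑ logb 2 (1+|t j|))
  have hsqK : Real.sqrt K * Real.sqrt K = K := Real.mul_self_sqrt hKpos.le
  have hsqKpos : 0 < Real.sqrt K := Real.sqrt_pos.mpr hKpos
  set s : ℝ := ∑ j, |t j| with hs
  have hs0 : 0 ≤ s := Finset.sum_nonneg fun j _ => abs_nonneg _
  have hsK : s ≤ Real.sqrt K := by
    have h1 : s^2 ≤ K * c := by
      have := sq_sum_le_card_mul_sum_sq (s := Finset.univ) (f := fun j => |t j|)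
      simpa [sq_abs, hc] using this
    have h2 : s^2 ≤ K := by nlinarith
    nlinarith [hs0, hsqKpos, hsqK]
  have key : (K : ℝ)⁻¹ * ∑ j, Real.logb 2 (1 + |t j|) ≤ Real.logb 2 (1 + 1/Real.sqrt K) := by
    have hAMGM := Real.geom_mean_le_arith_mean_weighted Finset.univ
      (fun _ : Fin K => (K : ℝ)⁻¹) (fun j => 1 + |t j|)
      (fun i _ => by positivity)
      (by simp [Finset.card_univ]; field_simp)
      (fun i _ => by positivity)
    set P : ℝ := ∏ j, (1 + |t j|) ^ ((K : ℝ)⁻¹) with hP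
    have hPpos : 0 < P := Finset.prod_pos fun j _ => Real.rpow_pos_of_pos (by positivity) _
    have hPsum : ∑ j : Fin K, (K:ℝ)⁻¹ * (1 + |t j|) = 1 + (K:ℝ)⁻¹ * s := by
      rw [← Finset.mul_sum, Finset.sum_add_distrib, Finset.sum_const, Finset.card_univ,
        Fintype.card_fin, nsmul_eq_mul, mul_one, ← hs, mul_add]
      field_simp
    rw [hPsum] at hAMGM
    have hlogP : Real.logb 2 P = (K : ℝ)⁻¹ * ∑ j, Real.logb 2 (1 + |t j|) := by
      rw [hP, Real.logb_prod _ _ (fun j _ => by positivity)]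
      rw [Finset.mul_sum]
      refine Finset.sum_congr rfl fun j _ => ?_
      simp only [Real.logb]
      rw [Real.log_rpow (by positivity)]
      ring
    rw [← hlogP]
    calc Real.logb 2 P ≤ Real.logb 2 (1 + (K:ℝ)⁻¹ * s) :=
          Real.logb_le_logb_of_le (by norm_num) (by positivity) hAMGM
      _ ≤ Real.logb 2 (1 + 1/Real.sqrt K) := by
          apply Real.logb_le_logb_of_le (by norm_num) (by positivity)
          have : (K:ℝ)⁻¹ * s ≤ (K:ℝ)⁻¹ * Real.sqrt K :=
            mul_le_mul_of_nonneg_left hsK (by positivity)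
          have heq : (K:ℝ)⁻¹ * Real.sqrt K = 1 / Real.sqrt K := by
            rw [eq_div_iff (ne_of_gt hsqKpos), mul_assoc, hsqK]
            exact inv_mul_cancel₀ (ne_of_gt hKpos)
          linarith [this, heq]
  have hKne : (K:ℝ) ≠ 0 := ne_of_gt hKpos
  have h1 : (K:ℝ)⁻¹ * ((K:ℝ) - ∑ j, Real.logb 2 (1 + |t j|))
      = 1 - (K:ℝ)⁻¹ * ∑ j, Real.logb 2 (1 + |t j|) := by
    field_simp
  rw [h1]
  linarith [key]
end

section
/- The function f(t) = h((1 + √t)/2), where h(p) = -p log₂ p - (1-p) log₂(1-p) is the binary Shannon entropy (with 0·log₂0 := 0), is concave on the interval [0,1]. -/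
open Real Set

private lemma hasDerivAt_phi {x : ℝ} (hx : x ∈ Ioo (0:ℝ) 1) :
    HasDerivAt (fun s : ℝ => 2 * s / (1 - s ^ 2) - (Real.log (1 + s) - Real.log (1 - s)))
      (4 * x ^ 2 / (1 - x ^ 2) ^ 2) x := by
  have h1 : (0:ℝ) < 1 + x := by nlinarith [hx.1]
  have h2 : (0:ℝ) < 1 - x := by nlinarith [hx.2]
  have hd : (1:ℝ) - x ^ 2 ≠ 0 := by nlinarith [hx.1, hx.2]
  have A := ((hasDerivAt_id' (𝕜 := ℝ) x).const_mul 2).div ((hasDerivAt_pow 2 x).const_sub 1) hd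
  have B := ((hasDerivAt_id' (𝕜 := ℝ) x).const_add 1).log h1.ne'
  have C := ((hasDerivAt_id' (𝕜 := ℝ) x).const_sub 1).log h2.ne'
  refine (A.sub (B.sub C)).congr_deriv ?_
  have hx2 : (1:ℝ) + x ≠ 0 := h1.ne'
  have hx3 : (1:ℝ) - x ≠ 0 := h2.ne'
  field_simp
  ring

private lemma log_ineq {s : ℝ} (hs : s ∈ Ico (0:ℝ) 1) :
    Real.log (1 + s) - Real.log (1 - s) ≤ 2 * s / (1 - s ^ 2) := by
  have hmono : MonotoneOn
      (fun s : ℝ => 2 * s / (1 - s ^ 2) - (Real.log (1 + s) - Real.log (1 - s)))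
      (Ico (0:ℝ) 1) := by
    apply monotoneOn_of_deriv_nonneg (convex_Ico 0 1)
    · apply ContinuousOn.sub
      · exact (continuousOn_const.mul continuousOn_id).div
          (continuousOn_const.sub (continuousOn_pow 2))
          (fun x hx => ne_of_gt (by nlinarith [hx.1, hx.2]))
      · exact ((continuousOn_const.add continuousOn_id).log
            (fun x hx => ne_of_gt (by simp only [Pi.add_apply, Pi.sub_apply, id_eq]; nlinarith [hx.1, hx.2]))).sub
          ((continuousOn_const.sub continuousOn_id).log
            (fun x hx => ne_of_gt (by simp only [Pi.add_apply, Pi.sub_apply, id_eq]; nlinarith [hx.1, hx.2])))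
    · rw [interior_Ico]
      exact fun x hx => (hasDerivAt_phi hx).differentiableAt.differentiableWithinAt
    · rw [interior_Ico]
      intro x hx
      rw [(hasDerivAt_phi hx).deriv]
      positivity
  have h0 : (0:ℝ) ∈ Ico (0:ℝ) 1 := ⟨le_refl 0, one_pos⟩
  have := hmono h0 hs hs.1
  simp at this
  linarith

private lemma hasDerivAt_w {x : ℝ} (hx : x ∈ Ioo (0:ℝ) 1) :
    HasDerivAt (fun s : ℝ => (Real.log (1 + s) - Real.log (1 - s)) / s)
      (((1 / (1 + x) - -1 / (1 - x)) * x - (Real.log (1 + x) - Real.log (1 - x)) * 1) / x ^ 2) x := by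
  have h1 : (0:ℝ) < 1 + x := by nlinarith [hx.1]
  have h2 : (0:ℝ) < 1 - x := by nlinarith [hx.2]
  have B := ((hasDerivAt_id' (𝕜 := ℝ) x).const_add 1).log h1.ne'
  have C := ((hasDerivAt_id' (𝕜 := ℝ) x).const_sub 1).log h2.ne'
  exact (B.sub C).div (hasDerivAt_id' x) hx.1.ne'

private lemma w_mono :
    MonotoneOn (fun s : ℝ => (Real.log (1 + s) - Real.log (1 - s)) / s) (Ioo (0:ℝ) 1) := by
  apply monotoneOn_of_deriv_nonneg (convex_Ioo 0 1)
  · apply ContinuousOn.div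
    · exact ((continuousOn_const.add continuousOn_id).log
          (fun x hx => ne_of_gt (by simp only [Pi.add_apply, Pi.sub_apply, id_eq]; nlinarith [hx.1, hx.2]))).sub
        ((continuousOn_const.sub continuousOn_id).log
          (fun x hx => ne_of_gt (by simp only [Pi.add_apply, Pi.sub_apply, id_eq]; nlinarith [hx.1, hx.2])))
    · exact continuousOn_id
    · exact fun x hx => ne_of_gt hx.1
  · rw [interior_Ioo]
    exact fun x hx => (hasDerivAt_w hx).differentiableAt.differentiableWithinAt
  · rw [interior_Ioo]
    intro x hx
    rw [(hasDerivAt_w hx).deriv]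
    have h1 : (0:ℝ) < 1 + x := by nlinarith [hx.1]
    have h2 : (0:ℝ) < 1 - x := by nlinarith [hx.2]
    have key := log_ineq (Ioo_subset_Ico_self hx)
    have hd : (1:ℝ) - x ^ 2 ≠ 0 := by nlinarith
    have e : (1 / (1 + x) - -1 / (1 - x)) * x = 2 * x / (1 - x ^ 2) := by
      field_simp
      ring
    apply div_nonneg _ (by positivity)
    rw [e]
    linarith

private lemma hasDerivAt_H {t : ℝ} (ht : t ∈ Ioo (0:ℝ) 1) :
    HasDerivAt (fun t : ℝ => Real.binEntropy ((1 + Real.sqrt t) / 2))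
      (-((Real.log (1 + Real.sqrt t) - Real.log (1 - Real.sqrt t)) / Real.sqrt t) / 4) t := by
  have hs0 : 0 < Real.sqrt t := Real.sqrt_pos.2 ht.1
  have hs1 : Real.sqrt t < 1 := by
    rw [show (1:ℝ) = Real.sqrt 1 by simp]
    exact Real.sqrt_lt_sqrt ht.1.le ht.2
  have hp0 : (1 + Real.sqrt t) / 2 ≠ 0 := by positivity
  have hp1 : (1 + Real.sqrt t) / 2 ≠ 1 := by
    intro h
    have : Real.sqrt t = 1 := by linarith [(div_eq_one_iff_eq (two_ne_zero (α := ℝ))).mp h]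
    linarith
  have hg : HasDerivAt (fun t : ℝ => (1 + Real.sqrt t) / 2)
      (1 / (2 * Real.sqrt t) / 2) t :=
    ((Real.hasDerivAt_sqrt ht.1.ne').const_add 1).div_const 2
  have h2 := (Real.hasDerivAt_binEntropy hp0 hp1).comp t hg
  simp only [Function.comp_def] at h2
  refine h2.congr_deriv ?_
  have e1 : (1:ℝ) - (1 + Real.sqrt t) / 2 = (1 - Real.sqrt t) / 2 := by ring
  rw [e1, Real.log_div (by linarith) two_ne_zero, Real.log_div (by linarith) two_ne_zero]
  field_simp [hs0.ne']
  try ring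
  try (left; trivial)

private lemma concaveOn_H :
    ConcaveOn ℝ (Icc (0:ℝ) 1) (fun t : ℝ => Real.binEntropy ((1 + Real.sqrt t) / 2)) := by
  apply AntitoneOn.concaveOn_of_deriv (convex_Icc 0 1)
  · exact (Real.binEntropy_continuous.comp (by fun_prop)).continuousOn
  · rw [interior_Icc]
    exact fun t ht => (hasDerivAt_H ht).differentiableAt.differentiableWithinAt
  · rw [interior_Icc]
    intro a ha b hb hab
    rw [(hasDerivAt_H ha).deriv, (hasDerivAt_H hb).deriv]
    have ha' : Real.sqrt a ∈ Ioo (0:ℝ) 1 := ⟨Real.sqrt_pos.2 ha.1, by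
      rw [show (1:ℝ) = Real.sqrt 1 by simp]; exact Real.sqrt_lt_sqrt ha.1.le ha.2⟩
    have hb' : Real.sqrt b ∈ Ioo (0:ℝ) 1 := ⟨Real.sqrt_pos.2 hb.1, by
      rw [show (1:ℝ) = Real.sqrt 1 by simp]; exact Real.sqrt_lt_sqrt hb.1.le hb.2⟩
    have := w_mono ha' hb' (Real.sqrt_le_sqrt hab)
    linarith

/-- The function `f(t) = h((1 + √t)/2)`, where `h` is the binary Shannon entropy
`h(p) = -p log₂ p - (1-p) log₂ (1-p)`, is concave on `[0, 1]`. -/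
theorem concaveOn_binaryEntropy_sqrt :
    ConcaveOn ℝ (Set.Icc (0 : ℝ) 1) (fun t =>
      -(((1 + Real.sqrt t) / 2) * Real.logb 2 ((1 + Real.sqrt t) / 2)) -
        (1 - (1 + Real.sqrt t) / 2) * Real.logb 2 (1 - (1 + Real.sqrt t) / 2)) := by
  have hlog2 : Real.log 2 ≠ 0 := (Real.log_pos (by norm_num)).ne'
  have heq : (fun t : ℝ =>
      -(((1 + Real.sqrt t) / 2) * Real.logb 2 ((1 + Real.sqrt t) / 2)) -
        (1 - (1 + Real.sqrt t) / 2) * Real.logb 2 (1 - (1 + Real.sqrt t) / 2))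
      = (Real.log 2)⁻¹ • (fun t : ℝ => Real.binEntropy ((1 + Real.sqrt t) / 2)) := by
    funext t
    simp only [Pi.smul_apply, smul_eq_mul, Real.binEntropy, Real.logb, Real.log_inv]
    field_simp
    ring
  rw [heq]
  exact concaveOn_H.smul (by positivity)
end
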